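/- arXiv:1303.3654 — 2 statements merged into one kernel-verified Lean document; each statement's English description precedes it below -/
import Mathlib

section
/- Let X be a real Banach space, let Y be a reflexive real Banach space with dual Y*, let φ ∈ Γ(Y), and let f : X → Y* be Lipschitz continuous around x̄ ∈ X and strictly (Fréchet) differentiable at x̄ with surjective derivative ∇f(x̄) : X → Y*. Define the solution map S : X ⇉ Y by S(x) = {y ∈ Y : 0 ∈ f(x) + ∂φ(y)}, and let ȳ ∈ S(x̄). Then S is calm at x̄ for ȳ if and only if there exist a neighborhood U of ȳ in Y and a constant c > 0 such that φ(y) ≥ φ(ȳ) + ⟨−f(x̄), y − ȳ⟩ + c·d(y, (∂φ)⁻¹(−f(x̄)))² for all y ∈ U. -/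
open Topology Filter Metric Set

/-- The convex subdifferential of an extended-real-valued function `φ` at `y`. -/
noncomputable def subdiff {Y : Type*} [NormedAddCommGroup Y] [NormedSpace ℝ Y]
    (φ : Y → EReal) (y : Y) : Set (Y →L[ℝ] ℝ) :=
  {p | φ y ≠ ⊤ ∧ ∀ z : Y, φ y + ((p (z - y) : ℝ) : EReal) ≤ φ z}



/-- Ekeland's variational principle for real-valued lsc functions bounded below,
strong form anchored at a point. -/
theorem my_ekeland {Y : Type*} [MetricSpace Y] [CompleteSpace Y]
    (h : Y → ℝ) (hlsc : LowerSemicontinuous h) (h0 : ∀ z, 0 ≤ h z)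
    (y : Y) (ε : ℝ) (hε : 0 < ε) :
    ∃ z : Y, h z + ε * dist z y ≤ h y ∧ ∀ z', h z ≤ h z' + ε * dist z' z := by
  -- the set of points "better than w"
  set S : Y → Set Y := fun w => {z | h z + ε * dist z w ≤ h w} with hS
  have hmemS : ∀ w, w ∈ S w := by intro w; simp [hS]
  have hSclosed : ∀ w, IsClosed (S w) := by
    intro w
    have : LowerSemicontinuous fun z => h z + ε * dist z w :=
      hlsc.add ((continuous_const.mul (continuous_id.dist continuous_const)).lowerSemicontinuous)
    exact this.isClosed_preimage (h w)
  have hStrans : ∀ w z, z ∈ S w → S z ⊆ S w := by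
    intro w z hz u hu
    simp only [hS, mem_setOf_eq] at *
    have := dist_triangle u z w
    nlinarith [hu, hz]
  have hSmono : ∀ w z, z ∈ S w → h z ≤ h w := by
    intro w z hz
    have : h z + ε * dist z w ≤ h w := hz
    nlinarith [dist_nonneg (x := z) (y := w)]
  -- choice of near-minimizers
  have key : ∀ (n : ℕ) (w : Y), ∃ z ∈ S w, ∀ u ∈ S w, h z ≤ h u + (1/2)^n := by
    intro n w
    have hne : (h '' S w).Nonempty := ⟨h w, w, hmemS w, rfl⟩
    have hbdd : BddBelow (h '' S w) := ⟨0, by rintro _ ⟨u, -, rfl⟩; exact h0 u⟩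
    obtain ⟨a, ⟨z, hzS, rfl⟩, ha⟩ := exists_lt_of_csInf_lt hne
      (lt_add_of_pos_right (sInf (h '' S w)) (by positivity : (0:ℝ) < (1/2)^n))
    exact ⟨z, hzS, fun u hu => (le_of_lt ha).trans
      (by linarith [csInf_le hbdd ⟨u, hu, rfl⟩])⟩
  choose F hF1 hF2 using key
  set seq : ℕ → Y := fun n => Nat.rec y (fun n zn => F n zn) n with hseq
  have hseq_succ : ∀ n, seq (n+1) = F n (seq n) := fun n => rfl
  have hstep : ∀ n, seq (n+1) ∈ S (seq n) := fun n => by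
    rw [hseq_succ]; exact hF1 n (seq n)
  have hchain : ∀ m n, n ≤ m → seq m ∈ S (seq n) := by
    intro m n hnm
    induction m with
    | zero => simp_all [Nat.le_zero.mp hnm, hmemS]
    | succ k ih =>
      rcases Nat.lt_or_ge n (k+1) with hlt | hge
      · exact hStrans _ _ (ih (Nat.lt_succ_iff.mp hlt)) (hstep k)
      · have : n = k + 1 := le_antisymm hnm hge
        subst this; exact hmemS _
  -- h ∘ seq is antitone and bounded below, hence convergent, hence seq is Cauchy
  have hanti : ∀ m n, n ≤ m → h (seq m) ≤ h (seq n) := fun m n hnm => hSmono _ _ (hchain m n hnm)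
  have hbdd : BddBelow (Set.range fun n => h (seq n)) := ⟨0, by rintro _ ⟨n, rfl⟩; exact h0 _⟩
  set L : ℝ := ⨅ n, h (seq n) with hL
  have htend : Filter.Tendsto (fun n => h (seq n)) atTop (nhds L) :=
    tendsto_atTop_ciInf (fun a b hab => hanti b a hab) hbdd
  have hge : ∀ n, L ≤ h (seq n) := fun n => ciInf_le hbdd n
  have hdist : ∀ m n, n ≤ m → ε * dist (seq m) (seq n) ≤ h (seq n) - h (seq m) := by
    intro m n hnm
    have := hchain m n hnm
    simp only [hS, mem_setOf_eq] at this
    linarith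
  have hcauchy : CauchySeq seq := by
    rw [Metric.cauchySeq_iff']
    intro δ hδ
    obtain ⟨N, hN⟩ := (Metric.tendsto_atTop.mp htend) (ε * δ / 2) (by positivity)
    refine ⟨N, fun m hm => ?_⟩
    have h1 := hdist m N hm
    have h2 := hN N le_rfl
    have h3 := hN m (le_trans le_rfl hm)
    rw [Real.dist_eq] at h2
    have h2' : h (seq N) - L < ε * δ / 2 := by
      have := abs_lt.mp h2; linarith
    have h4 : h (seq N) - h (seq m) < ε * δ / 2 := by linarith [hge m]
    rw [dist_comm] at h1 ⊢
    nlinarith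
  obtain ⟨z, hz⟩ := cauchySeq_tendsto_of_complete hcauchy
  have hzS : ∀ n, z ∈ S (seq n) := by
    intro n
    exact (hSclosed (seq n)).mem_of_tendsto hz
      (Filter.eventually_atTop.mpr ⟨n, fun m hm => hchain m n hm⟩)
  have hz0 : z ∈ S y := hzS 0
  refine ⟨z, hz0, ?_⟩
  by_contra hcon
  push_neg at hcon
  obtain ⟨z', hz'⟩ := hcon
  -- z' ∈ S (seq n) for all n
  have hz'S : ∀ n, z' ∈ S (seq n) := by
    intro n
    have h1 : z ∈ S (seq n) := hzS n
    simp only [hS, mem_setOf_eq] at h1 ⊢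
    have := dist_triangle z' z (seq n)
    nlinarith
  have hle : ∀ n, h z ≤ h z' + (1/2)^n := by
    intro n
    have h1 : h (seq (n+1)) ≤ h z' + (1/2)^n := by
      rw [hseq_succ]; exact hF2 n (seq n) z' (hz'S n)
    have h2 : h z ≤ h (seq (n+1)) := hSmono _ _ (hzS (n+1))
    linarith
  have : h z ≤ h z' := by
    have := ge_of_tendsto (f := fun n : ℕ => h z' + (1/2)^n) (x := atTop)
      (by simpa using tendsto_const_nhds.add (tendsto_pow_atTop_nhds_zero_of_lt_one
        (by norm_num) (by norm_num : (1:ℝ)/2 < 1))) (Filter.Eventually.of_forall hle)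
    linarith
  have hd : 0 ≤ ε * dist z' z := by positivity
  linarith

theorem my_ekeland_ereal {Y : Type*} [MetricSpace Y] [CompleteSpace Y]
    (h : Y → EReal) (hlsc : LowerSemicontinuous h) (h0 : ∀ z, 0 ≤ h z)
    (y : Y) (hy : h y ≠ ⊤) (ε : ℝ) (hε : 0 < ε) :
    ∃ z : Y, h z ≤ h y ∧ ε * dist z y ≤ (h y).toReal ∧
      ∀ z', h z ≤ h z' + ((ε * dist z' z : ℝ) : EReal) := by
  have hybot : h y ≠ ⊥ := fun hb => by have := h0 y; rw [hb] at this; exact absurd this (by simp)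
  set T : ℝ := (h y).toReal + 1 with hT
  have hyT : h y < ((T : ℝ) : EReal) := by
    conv_lhs => rw [← EReal.coe_toReal hy hybot]
    exact_mod_cast lt_add_one _
  have hmin_ne_top : ∀ z, min (h z) ((T:ℝ):EReal) ≠ ⊤ := fun z =>
    ne_top_of_le_ne_top (by simp : ((T:ℝ):EReal) ≠ ⊤) (min_le_right _ _)
  have hmin_nonneg : ∀ z, 0 ≤ min (h z) ((T:ℝ):EReal) := fun z =>
    le_min (h0 z) (le_of_lt ((h0 y).trans_lt hyT))
  have hmin_ne_bot : ∀ z, min (h z) ((T:ℝ):EReal) ≠ ⊥ := fun z hb => by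
    have := hmin_nonneg z; rw [hb] at this; exact absurd this (by simp)
  set h' : Y → ℝ := fun z => (min (h z) ((T:ℝ):EReal)).toReal with hh'
  have coe_h' : ∀ z, ((h' z : ℝ) : EReal) = min (h z) ((T:ℝ):EReal) := fun z =>
    EReal.coe_toReal (hmin_ne_top z) (hmin_ne_bot z)
  have h'0 : ∀ z, 0 ≤ h' z := fun z => by
    have h1 : ((0:ℝ):EReal) ≤ ((h' z : ℝ) : EReal) := by
      rw [coe_h']; exact_mod_cast hmin_nonneg z
    exact_mod_cast h1
  have h'y : h' y = (h y).toReal := by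
    simp only [hh', min_eq_left hyT.le]
  have h'lsc : LowerSemicontinuous h' := by
    intro z₀ b hb
    have hb' : ((b : ℝ) : EReal) < min (h z₀) ((T:ℝ):EReal) := by
      rw [← coe_h']; exact_mod_cast hb
    rw [lt_min_iff] at hb'
    filter_upwards [hlsc z₀ _ hb'.1] with z hz
    have : ((b : ℝ) : EReal) < min (h z) ((T:ℝ):EReal) := lt_min hz hb'.2
    rw [← coe_h'] at this
    exact_mod_cast this
  obtain ⟨z, hz1, hz2⟩ := my_ekeland h' h'lsc h'0 y ε hε
  have hzy : h z ≤ h y := by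
    have h1 : min (h z) ((T:ℝ):EReal) ≤ h y := by
      rw [← coe_h', ← EReal.coe_toReal hy hybot, ← h'y]
      exact_mod_cast (by linarith [mul_nonneg hε.le (dist_nonneg (x := z) (y := y))] : h' z ≤ h' y)
    rcases min_cases (h z) ((T:ℝ):EReal) with ⟨he, _⟩ | ⟨he, hge⟩
    · rwa [he] at h1
    · rw [he] at h1; exact absurd (h1.trans_lt hyT) (lt_irrefl _)
  have hminz : min (h z) ((T:ℝ):EReal) = h z := min_eq_left (hzy.trans hyT.le)
  refine ⟨z, hzy, by linarith [h'0 z, h'y ▸ hz1], fun z' => ?_⟩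
  rcases eq_or_ne (h z') ⊤ with ht | ht
  · have hnb : ((ε * dist z' z : ℝ) : EReal) ≠ ⊥ := EReal.coe_ne_bot _
    rw [ht, EReal.top_add_of_ne_bot hnb]; exact le_top
  rcases le_or_gt ((T:ℝ):EReal) (h z') with hTz | hTz
  · calc h z ≤ h y := hzy
      _ ≤ ((T:ℝ):EReal) := hyT.le
      _ ≤ h z' := hTz
      _ ≤ h z' + ((ε * dist z' z : ℝ) : EReal) := by
          conv_lhs => rw [← add_zero (h z')]
          exact add_le_add_right (by exact_mod_cast mul_nonneg hε.le dist_nonneg) _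
  · have hminz' : min (h z') ((T:ℝ):EReal) = h z' := min_eq_left hTz.le
    have := hz2 z'
    calc h z = ((h' z : ℝ) : EReal) := by rw [coe_h', hminz]
      _ ≤ ((h' z' : ℝ) : EReal) + ((ε * dist z' z : ℝ) : EReal) := by
          rw [← EReal.coe_add]; exact_mod_cast hz2 z'
      _ = h z' + ((ε * dist z' z : ℝ) : EReal) := by rw [coe_h', hminz']

section helpers
variable {Y : Type*} [NormedAddCommGroup Y] [NormedSpace ℝ Y]

/-- From `p ∈ subdiff φ y` get a real inequality at a point where `φ` is finite. -/
lemma subdiff_real_ineq {φ : Y → EReal} (hbot : ∀ v, φ v ≠ ⊥) {p : Y →L[ℝ] ℝ} {y z : Y}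
    (hp : p ∈ subdiff φ y) (hz : φ z ≠ ⊤) :
    (φ y).toReal + p (z - y) ≤ (φ z).toReal := by
  have h1 := hp.2 z
  have hyt : φ y ≠ ⊤ := hp.1
  rw [← EReal.coe_toReal hyt (hbot y), ← EReal.coe_add] at h1
  have h2 := EReal.toReal_le_toReal h1 (EReal.coe_ne_bot _) hz
  rwa [EReal.toReal_coe] at h2

/-- Build a subdiff membership from a real inequality valid at finiteness points. -/
lemma subdiff_of_real_ineq {φ : Y → EReal} (hbot : ∀ v, φ v ≠ ⊥) {p : Y →L[ℝ] ℝ} {y : Y}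
    (hy : φ y ≠ ⊤)
    (h : ∀ z, φ z ≠ ⊤ → (φ y).toReal + p (z - y) ≤ (φ z).toReal) :
    p ∈ subdiff φ y := by
  refine ⟨hy, fun z => ?_⟩
  rcases eq_or_ne (φ z) ⊤ with ht | ht
  · rw [ht]; exact le_top
  · rw [← EReal.coe_toReal hy (hbot y), ← EReal.coe_add,
      ← EReal.coe_toReal ht (hbot z)]
    exact_mod_cast h z ht

end helpers


/-- Existence of a small subgradient at an `ε`-minimum of a convex function. -/
theorem exists_small_subgradient {Y : Type*} [NormedAddCommGroup Y] [NormedSpace ℝ Y]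
    (φ : Y → EReal) (hne_bot : ∀ y, φ y ≠ ⊥)
    (hconv : ∀ y z : Y, ∀ a b : ℝ, 0 ≤ a → 0 ≤ b → a + b = 1 →
      φ (a • y + b • z) ≤ (a : EReal) * φ y + (b : EReal) * φ z)
    (z : Y) (hz : φ z ≠ ⊤) (ε : ℝ) (hε : 0 < ε)
    (hmin : ∀ z', φ z ≤ φ z' + ((ε * ‖z' - z‖ : ℝ) : EReal)) :
    ∃ w : Y →L[ℝ] ℝ, ‖w‖ ≤ ε ∧ w ∈ subdiff φ z := by
  classical
  set tz : ℝ := (φ z).toReal with htz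
  -- the two convex sets in Y × ℝ
  set O : Set (Y × ℝ) := {p | p.2 + ε * ‖p.1‖ < 0} with hO
  set T : Set (Y × ℝ) := {p | φ (z + p.1) ≤ φ z + ((p.2 : ℝ) : EReal)} with hT
  have hOopen : IsOpen O := by
    have : Continuous fun p : Y × ℝ => p.2 + ε * ‖p.1‖ :=
      continuous_snd.add (continuous_const.mul continuous_fst.norm)
    exact isOpen_lt this continuous_const
  have hOconv : Convex ℝ O := by
    rintro p hp q hq a b ha hb hab
    simp only [hO, mem_setOf_eq] at *
    have hn : ‖a • p.1 + b • q.1‖ ≤ a * ‖p.1‖ + b * ‖q.1‖ := by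
      calc ‖a • p.1 + b • q.1‖ ≤ ‖a • p.1‖ + ‖b • q.1‖ := norm_add_le _ _
        _ = a * ‖p.1‖ + b * ‖q.1‖ := by
            rw [norm_smul, norm_smul, Real.norm_eq_abs, Real.norm_eq_abs,
              abs_of_nonneg ha, abs_of_nonneg hb]
    have h2 : (a • p + b • q).2 = a * p.2 + b * q.2 := rfl
    have h1 : (a • p + b • q).1 = a • p.1 + b • q.1 := rfl
    rw [h1, h2]
    have key : a * (p.2 + ε * ‖p.1‖) + b * (q.2 + ε * ‖q.1‖) < 0 := by
      rcases lt_or_eq_of_le ha with ha' | ha'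
      · nlinarith [mul_le_mul_of_nonneg_left hq.le hb]
      · have hb1 : b = 1 := by linarith
        rw [← ha', hb1]; simpa using hq
    nlinarith [mul_le_mul_of_nonneg_left hn (le_of_lt hε)]
  have hTconv : Convex ℝ T := by
    rintro p hp q hq a b ha hb hab
    simp only [hT, mem_setOf_eq] at *
    -- finiteness of values
    have hfzt : φ z ≠ ⊤ := hz
    have hp_top : φ (z + p.1) ≠ ⊤ := by
      intro htop
      rw [htop] at hp
      rw [← EReal.coe_toReal hfzt (hne_bot z), ← EReal.coe_add] at hp
      exact absurd (top_le_iff.mp hp) (EReal.coe_ne_top _)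
    have hq_top : φ (z + q.1) ≠ ⊤ := by
      intro htop
      rw [htop] at hq
      rw [← EReal.coe_toReal hfzt (hne_bot z), ← EReal.coe_add] at hq
      exact absurd (top_le_iff.mp hq) (EReal.coe_ne_top _)
    set rp : ℝ := (φ (z + p.1)).toReal with hrp
    set rq : ℝ := (φ (z + q.1)).toReal with hrq
    have hpr : rp ≤ tz + p.2 := by
      have := EReal.toReal_le_toReal hp (hne_bot _) (by
        rw [← EReal.coe_toReal hfzt (hne_bot z), ← EReal.coe_add]; exact EReal.coe_ne_top _)
      rwa [← EReal.coe_toReal hfzt (hne_bot z), ← EReal.coe_add, EReal.toReal_coe] at this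
    have hqr : rq ≤ tz + q.2 := by
      have := EReal.toReal_le_toReal hq (hne_bot _) (by
        rw [← EReal.coe_toReal hfzt (hne_bot z), ← EReal.coe_add]; exact EReal.coe_ne_top _)
      rwa [← EReal.coe_toReal hfzt (hne_bot z), ← EReal.coe_add, EReal.toReal_coe] at this
    have hcomb : z + (a • p + b • q).1 = a • (z + p.1) + b • (z + q.1) := by
      have h1 : (a • p + b • q).1 = a • p.1 + b • q.1 := rfl
      rw [h1, smul_add, smul_add]
      rw [show a • z + a • p.1 + (b • z + b • q.1) = (a • z + b • z) + (a • p.1 + b • q.1) by abel,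
        ← add_smul, hab, one_smul]
    have hchain : φ (z + (a • p + b • q).1) ≤ ((a * rp + b * rq : ℝ) : EReal) := by
      rw [hcomb]
      calc φ (a • (z + p.1) + b • (z + q.1)) ≤
          (a : EReal) * φ (z + p.1) + (b : EReal) * φ (z + q.1) :=
            hconv _ _ a b ha hb hab
        _ = ((a * rp + b * rq : ℝ) : EReal) := by
            rw [← EReal.coe_toReal hp_top (hne_bot _), ← EReal.coe_toReal hq_top (hne_bot _),
              ← hrp, ← hrq, ← EReal.coe_mul, ← EReal.coe_mul, ← EReal.coe_add]
    refine hchain.trans ?_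
    have h2 : (a • p + b • q).2 = a * p.2 + b * q.2 := rfl
    rw [h2, ← EReal.coe_toReal hfzt (hne_bot z), ← EReal.coe_add]
    refine EReal.coe_le_coe_iff.mpr ?_
    have k1 := mul_le_mul_of_nonneg_left hpr ha
    have k2 := mul_le_mul_of_nonneg_left hqr hb
    have htzeq : tz = (φ z).toReal := rfl
    have hsum : a * tz + b * tz = tz := by rw [← add_mul, hab, one_mul]
    nlinarith [k1, k2, hsum, htzeq]
  have hdisj : Disjoint O T := by
    rw [Set.disjoint_left]
    rintro p hpO hpT
    simp only [hO, hT, mem_setOf_eq] at hpO hpT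
    have hp_top : φ (z + p.1) ≠ ⊤ := by
      intro htop
      rw [htop] at hpT
      rw [← EReal.coe_toReal hz (hne_bot z), ← EReal.coe_add] at hpT
      exact absurd (top_le_iff.mp hpT) (EReal.coe_ne_top _)
    set r : ℝ := (φ (z + p.1)).toReal with hr
    have h1 : r ≤ tz + p.2 := by
      have := EReal.toReal_le_toReal hpT (hne_bot _) (by
        rw [← EReal.coe_toReal hz (hne_bot z), ← EReal.coe_add]; exact EReal.coe_ne_top _)
      rwa [← EReal.coe_toReal hz (hne_bot z), ← EReal.coe_add, EReal.toReal_coe] at this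
    have h2 : tz ≤ r + ε * ‖p.1‖ := by
      have hm := hmin (z + p.1)
      simp only [add_sub_cancel_left] at hm
      have := EReal.toReal_le_toReal hm (hne_bot _) (by
        rw [← EReal.coe_toReal hp_top (hne_bot _), ← EReal.coe_add]; exact EReal.coe_ne_top _)
      rwa [← EReal.coe_toReal hp_top (hne_bot _), ← EReal.coe_add, EReal.toReal_coe] at this
    linarith
  obtain ⟨F, u, hFO, hFT⟩ := geometric_hahn_banach_open hOconv hOopen hTconv hdisj
  -- u = 0
  have hT0 : ((0 : Y), (0 : ℝ)) ∈ T := by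
    simp only [hT, mem_setOf_eq, add_zero, EReal.coe_zero, le_refl]
  have hu0 : u ≤ 0 := le_trans (hFT _ hT0) (le_of_eq (by rw [show ((0:Y),(0:ℝ)) = 0 from rfl]; exact map_zero F))
  have hu0' : 0 ≤ u := by
    have htend : Filter.Tendsto (fun δ : ℝ => F ((0 : Y), -δ)) (𝓝[>] 0) (𝓝 (F (0, 0))) := by
      apply Filter.Tendsto.comp F.continuous.continuousAt
      have hc : Continuous (fun δ : ℝ => ((0 : Y), -δ)) := continuous_const.prodMk continuous_neg
      have := hc.tendsto 0
      simpa using this.mono_left nhdsWithin_le_nhds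
    have hev : ∀ᶠ δ in 𝓝[>] (0:ℝ), F ((0 : Y), -δ) < u := by
      filter_upwards [self_mem_nhdsWithin] with δ (hδ : 0 < δ)
      exact hFO _ (by simp [hO, hδ])
    have := le_of_tendsto htend (hev.mono fun δ h => h.le)
    rwa [show ((0:Y),(0:ℝ)) = 0 from rfl, map_zero] at this
  have hu : u = 0 := le_antisymm hu0 hu0'
  -- s = F(0,1) > 0
  set s : ℝ := F ((0 : Y), 1) with hs
  have hspos : 0 < s := by
    have := hFO ((0 : Y), -1) (by simp [hO])
    rw [hu] at this
    have hlin : F ((0 : Y), -1) = -s := by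
      rw [hs, ← ContinuousLinearMap.map_neg]
      norm_num
    linarith [hlin ▸ this]
  -- decomposition F(v,t) = F(v,0) + t * s
  have hdec : ∀ (v : Y) (t : ℝ), F (v, t) = F (v, 0) + t * s := by
    intro v t
    have : (v, t) = (v, (0:ℝ)) + t • ((0:Y), (1:ℝ)) := by
      simp [Prod.ext_iff]
    rw [this, F.map_add, F.map_smul]
    simp [hs, smul_eq_mul]
  -- bound : F(v,0) ≤ s * ε * ‖v‖
  have hbound : ∀ v : Y, F (v, 0) ≤ s * (ε * ‖v‖) := by
    intro v
    have key : ∀ δ > (0:ℝ), F (v, 0) ≤ s * (ε * ‖v‖) + s * δ := by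
      intro δ hδ
      have hmem : (v, -(ε * ‖v‖) - δ) ∈ O := by
        simp only [hO, mem_setOf_eq]; linarith
      have := hFO _ hmem
      rw [hu, hdec] at this
      nlinarith
    by_contra hcon
    push_neg at hcon
    set δ := (F (v,0) - s * (ε * ‖v‖)) / (2 * s) with hδdef
    have hδ : 0 < δ := div_pos (by linarith) (by positivity)
    have hkey := key δ hδ
    have hsd : s * δ = (F (v,0) - s * (ε * ‖v‖)) / 2 := by
      rw [hδdef]; field_simp
    linarith
  set w : Y →L[ℝ] ℝ := (-(1/s)) • (F.comp (ContinuousLinearMap.inl ℝ Y ℝ)) with hw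
  have hw_apply : ∀ v, w v = -(1/s) * F (v, 0) := fun v => rfl
  refine ⟨w, ?_, ?_⟩
  · refine ContinuousLinearMap.opNorm_le_bound w hε.le (fun v => ?_)
    rw [hw_apply, Real.norm_eq_abs, abs_mul, abs_neg,
      abs_of_nonneg (by positivity : (0:ℝ) ≤ 1/s)]
    have h1 := hbound v
    have h2 := hbound (-v)
    have h3 : F (-v, (0:ℝ)) = -F (v, 0) := by
      rw [show ((-v, (0:ℝ)) : Y × ℝ) = -(v, (0:ℝ)) by simp [Prod.ext_iff], F.map_neg]
    rw [h3, norm_neg] at h2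
    have h4 : |F (v, 0)| ≤ s * (ε * ‖v‖) := abs_le.mpr ⟨by linarith, h1⟩
    rw [one_div, inv_mul_le_iff₀ hspos]
    exact h4.trans (le_of_eq (by ring))
  · refine subdiff_of_real_ineq hne_bot hz (fun y' hy' => ?_)
    set t : ℝ := (φ y').toReal - tz with ht'
    have hmemT : (y' - z, t) ∈ T := by
      simp only [hT, mem_setOf_eq, add_sub_cancel]
      rw [← EReal.coe_toReal hz (hne_bot z), ← EReal.coe_add, ht']
      rw [← EReal.coe_toReal hy' (hne_bot y')]
      norm_num
      rw [htz, ← EReal.coe_sub, ← EReal.coe_add]; exact EReal.coe_le_coe_iff.mpr (by linarith)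
    have := hFT _ hmemT
    rw [hu, hdec] at this
    have hwv : w (y' - z) ≤ t := by
      rw [hw_apply]
      have h5 : -F (y' - z, 0) ≤ t * s := by linarith
      have h6 := mul_le_mul_of_nonneg_left h5 (le_of_lt (show (0:ℝ) < 1/s by positivity))
      have hs1 : (1/s) * (t * s) = t := by field_simp
      nlinarith [h6, hs1]
    have htzeq : tz = (φ z).toReal := rfl
    linarith [hwv, htzeq, ht']

/-- lsc of an EReal function plus a continuous real function. -/
theorem lsc_add_cont {Y : Type*} [TopologicalSpace Y]
    (φ : Y → EReal) (hlsc : LowerSemicontinuous φ) (hne_bot : ∀ v, φ v ≠ ⊥)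
    (c : Y → ℝ) (hc : Continuous c) :
    LowerSemicontinuous fun v => φ v + ((c v : ℝ) : EReal) := by
  intro z₀ b hb
  induction b with
  | bot =>
    have : ∀ z, φ z + ((c z : ℝ) : EReal) ≠ ⊥ := fun z => by
      rw [Ne, EReal.add_eq_bot_iff]
      push_neg
      exact ⟨hne_bot z, EReal.coe_ne_bot _⟩
    exact Filter.Eventually.of_forall fun z => Ne.bot_lt (this z)
  | coe r =>
    have h1 : ((r - c z₀ : ℝ) : EReal) < φ z₀ := by
      by_contra hcon
      push_neg at hcon
      have := add_le_add_left hcon ((c z₀ : ℝ) : EReal)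
      rw [← EReal.coe_add] at this
      have h2 : φ z₀ + ((c z₀:ℝ):EReal) ≤ ((r : ℝ) : EReal) := by
        simpa [sub_add_cancel] using this
      exact absurd hb (not_lt.mpr h2)
    obtain ⟨q, hq1, hq2⟩ := EReal.exists_between_coe_real h1
    have hev1 := hlsc z₀ _ hq2
    have hev2 : ∀ᶠ z in nhds z₀, r - q < c z := by
      have : r - q < c z₀ := by
        have := EReal.coe_lt_coe_iff.mp hq1
        linarith
      exact (hc.continuousAt (x := z₀)).eventually_const_lt this
    filter_upwards [hev1, hev2] with z h1' h2'
    calc ((r : ℝ) : EReal) = ((q : ℝ) : EReal) + ((r - q : ℝ) : EReal) := by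
          rw [← EReal.coe_add]; norm_num
      _ < φ z + ((c z : ℝ) : EReal) := EReal.add_lt_add h1' (EReal.coe_lt_coe_iff.mpr h2')
  | top => exact absurd hb (by simp)


/-- Quantitative openness (Graves' theorem) for strictly differentiable maps with
surjective derivative. -/
theorem graves {X Z : Type*} [NormedAddCommGroup X] [NormedSpace ℝ X] [CompleteSpace X]
    [NormedAddCommGroup Z] [NormedSpace ℝ Z] [CompleteSpace Z]
    (f : X → Z) (xbar : X) (A : X →L[ℝ] Z) (hA : HasStrictFDerivAt f A xbar)
    (hs : Function.Surjective ⇑A) :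
    ∃ M > (0:ℝ), ∃ r > (0:ℝ), ∀ p : Z, ‖p - f xbar‖ ≤ r →
      ∃ x, f x = p ∧ ‖x - xbar‖ ≤ M * ‖p - f xbar‖ := by
  have hrange : LinearMap.range A = ⊤ := LinearMap.range_eq_top.mpr (by exact hs)
  set Ainv := A.nonlinearRightInverseOfSurjective hrange with hAinv
  have hN : 0 < (Ainv.nnnorm : ℝ) := by
    exact_mod_cast A.nonlinearRightInverseOfSurjective_nnnorm_pos hrange
  set cNN : NNReal := Ainv.nnnorm⁻¹ / 2 with hcNN
  have hcpos : 0 < cNN := by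
    rw [hcNN]
    have : 0 < Ainv.nnnorm⁻¹ := by
      rw [pos_iff_ne_zero, Ne, inv_eq_zero]
      exact fun h => by simp [h] at hN
    positivity
  obtain ⟨s, hs_nhds, happrox⟩ := hA.approximates_deriv_on_nhds (Or.inr hcpos)
  obtain ⟨δ, hδpos, hδball⟩ := Metric.nhds_basis_closedBall.mem_iff.mp hs_nhds
  set β : ℝ := (Ainv.nnnorm : ℝ)⁻¹ - (cNN : ℝ) with hβ
  have hβval : β = (Ainv.nnnorm : ℝ)⁻¹ / 2 := by
    rw [hβ, hcNN]
    push_cast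
    ring
  have hβpos : 0 < β := by rw [hβval]; positivity
  refine ⟨1/β, by positivity, β * δ, by positivity, fun p hp => ?_⟩
  rcases eq_or_ne p (f xbar) with rfl | hne
  · exact ⟨xbar, rfl, by simp⟩
  have hpnorm : 0 < ‖p - f xbar‖ := by
    rw [norm_pos_iff, sub_ne_zero]; exact hne
  set r' : ℝ := ‖p - f xbar‖ / β with hr'
  have hr'pos : 0 < r' := by positivity
  have hr'le : r' ≤ δ := by
    rw [hr', div_le_iff₀ hβpos]
    linarith [hp]
  have happrox' : ApproximatesLinearOn f A (closedBall xbar r') cNN :=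
    happrox.mono_set ((closedBall_subset_closedBall hr'le).trans hδball)
  have hsurj := happrox'.surjOn_closedBall_of_nonlinearRightInverse Ainv hr'pos.le
    (Subset.refl _)
  have hpmem : p ∈ closedBall (f xbar) (((Ainv.nnnorm : ℝ)⁻¹ - cNN) * r') := by
    rw [mem_closedBall, dist_eq_norm, ← hβ, hr', mul_div_cancel₀ _ hβpos.ne']
  obtain ⟨x, hx1, hx2⟩ := hsurj hpmem
  refine ⟨x, hx2, ?_⟩
  have := mem_closedBall.mp hx1
  rw [dist_eq_norm] at this
  rw [one_div]
  calc ‖x - xbar‖ ≤ r' := this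
    _ = β⁻¹ * ‖p - f xbar‖ := by rw [hr', div_eq_inv_mul]

set_option maxHeartbeats 3000000 in
/-- Let `X` be a Banach space, `Y` a reflexive Banach space, `φ ∈ Γ(Y)`,
and `f : X → Y*` Lipschitz around `x̄` and strictly differentiable at `x̄` with surjective
derivative `A = ∇f(x̄)`. Let `S(x) = {y : 0 ∈ f(x) + ∂φ(y)}` and `ȳ ∈ S(x̄)`. Then `S` is
calm at `x̄` for `ȳ` (i.e. for some `κ > 0` and neighborhoods `U` of `x̄`, `V` of `ȳ`,
`e(S(x) ∩ V, S(x̄)) ≤ κ·‖x - x̄‖` on `U`, stated pointwise over `y ∈ S(x) ∩ V`) if and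
only if there are a neighborhood `U'` of `ȳ` and `c > 0` with
`φ(y) ≥ φ(ȳ) + ⟨-f(x̄), y - ȳ⟩ + c·d(y, (∂φ)⁻¹(-f(x̄)))²` for all `y ∈ U'`. -/
theorem stmt_14 {X Y : Type*}
    [NormedAddCommGroup X] [NormedSpace ℝ X] [CompleteSpace X]
    [NormedAddCommGroup Y] [NormedSpace ℝ Y] [CompleteSpace Y]
    (hrefl : Function.Surjective ⇑(NormedSpace.inclusionInDoubleDual ℝ Y))
    (φ : Y → EReal)
    (hproper : ∃ y, φ y ≠ ⊤) (hne_bot : ∀ y, φ y ≠ ⊥)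
    (hlsc : LowerSemicontinuous φ)
    (hconv : ∀ y z : Y, ∀ a b : ℝ, 0 ≤ a → 0 ≤ b → a + b = 1 →
      φ (a • y + b • z) ≤ (a : EReal) * φ y + (b : EReal) * φ z)
    (f : X → (Y →L[ℝ] ℝ)) (xbar : X) (ybar : Y)
    (hlip : ∃ t ∈ 𝓝 xbar, ∃ L : NNReal, LipschitzOnWith L f t)
    (A : X →L[ℝ] (Y →L[ℝ] ℝ)) (hA : HasStrictFDerivAt f A xbar)
    (hAsurj : Function.Surjective ⇑A)
    (hsol : -(f xbar) ∈ subdiff φ ybar) :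
    (∃ κ > (0 : ℝ), ∃ U ∈ 𝓝 xbar, ∃ V ∈ 𝓝 ybar, ∀ x ∈ U, ∀ y : Y,
        -(f x) ∈ subdiff φ y → y ∈ V →
        infDist y {y' : Y | -(f xbar) ∈ subdiff φ y'} ≤ κ * ‖x - xbar‖) ↔
    (∃ U' ∈ 𝓝 ybar, ∃ c > (0 : ℝ), ∀ y ∈ U',
        φ ybar + (((-(f xbar)) (y - ybar)
            + c * (infDist y {y' : Y | -(f xbar) ∈ subdiff φ y'}) ^ 2 : ℝ) : EReal)
          ≤ φ y) := by
  classical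
  set g : Y →L[ℝ] ℝ := -(f xbar) with hg
  set C : Set Y := {y' : Y | g ∈ subdiff φ y'} with hC
  have hybarC : ybar ∈ C := hsol
  have hCne : C.Nonempty := ⟨ybar, hybarC⟩
  have hybt : φ ybar ≠ ⊤ := hsol.1
  set tyb : ℝ := (φ ybar).toReal with htyb
  have hd_le : ∀ v : Y, infDist v C ≤ dist v ybar := fun v =>
    infDist_le_dist_of_mem hybarC
  have hd_nonneg : ∀ v : Y, 0 ≤ infDist v C := fun v => infDist_nonneg
  constructor
  · -- calmness ⇒ quadratic growth
    rintro ⟨κ, hκ, U, hU, V, hV, hcalm⟩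
    obtain ⟨M, hM, r0, hr0, hG⟩ := graves f xbar A hA hAsurj
    obtain ⟨ρU, hρU, hρUsub⟩ := Metric.nhds_basis_closedBall.mem_iff.mp hU
    set r0' : ℝ := min r0 (ρU / M) with hr0'
    have hr0'pos : 0 < r0' := lt_min hr0 (div_pos hρU hM)
    -- subregularity of the subdifferential
    have hSR : ∀ z ∈ V, ∀ w : Y →L[ℝ] ℝ, w ∈ subdiff φ z → ‖w - g‖ ≤ r0' →
        infDist z C ≤ (κ * M) * ‖w - g‖ := by
      intro z hzV w hw hwg
      have hnorm : ‖-w - f xbar‖ = ‖w - g‖ := by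
        rw [hg]
        rw [show -w - f xbar = -(w - -(f xbar)) by abel]
        rw [norm_neg]
      obtain ⟨x, hfx, hxnorm⟩ := hG (-w) (by rw [hnorm]; exact hwg.trans (min_le_left _ _))
      rw [hnorm] at hxnorm
      have hxU : x ∈ U := by
        apply hρUsub
        rw [mem_closedBall, dist_eq_norm]
        calc ‖x - xbar‖ ≤ M * ‖w - g‖ := hxnorm
          _ ≤ M * (ρU / M) := by
              have := hwg.trans (min_le_right r0 (ρU / M))
              exact mul_le_mul_of_nonneg_left this hM.le
          _ = ρU := by field_simp
      have hfx' : -(f x) = w := by rw [hfx, neg_neg]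
      have := hcalm x hxU z (by rw [hfx']; exact hw) hzV
      calc infDist z C ≤ κ * ‖x - xbar‖ := this
        _ ≤ κ * (M * ‖w - g‖) := by
            exact mul_le_mul_of_nonneg_left hxnorm hκ.le
        _ = (κ * M) * ‖w - g‖ := by ring
    -- the excess function h
    set ℓ : Y → ℝ := fun v => -tyb - g (v - ybar) with hℓ
    have hℓcont : Continuous ℓ :=
      continuous_const.sub (g.continuous.comp (continuous_id.sub continuous_const))
    set h : Y → EReal := fun v => φ v + ((ℓ v : ℝ) : EReal) with hh
    have hfin : ∀ v, φ v ≠ ⊤ → h v = (((φ v).toReal + ℓ v : ℝ) : EReal) := by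
      intro v hv
      show φ v + ((ℓ v : ℝ) : EReal) = _
      conv_lhs => rw [← EReal.coe_toReal hv (hne_bot v)]
      rw [← EReal.coe_add]
    have htop : ∀ v, φ v = ⊤ → h v = ⊤ := by
      intro v hv
      rw [hh]
      simp only [hv]
      exact EReal.top_add_of_ne_bot (EReal.coe_ne_bot _)
    have h_ne_bot : ∀ v, h v ≠ ⊥ := by
      intro v
      rcases eq_or_ne (φ v) ⊤ with hv | hv
      · rw [htop v hv]; simp
      · rw [hfin v hv]; exact EReal.coe_ne_bot _
    have h_ne_top : ∀ v, φ v ≠ ⊤ → h v ≠ ⊤ := fun v hv => by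
      rw [hfin v hv]; exact EReal.coe_ne_top _
    have h_toReal : ∀ v, φ v ≠ ⊤ → (h v).toReal = (φ v).toReal + ℓ v := fun v hv => by
      rw [hfin v hv, EReal.toReal_coe]
    have h0 : ∀ v, 0 ≤ h v := by
      intro v
      rcases eq_or_ne (φ v) ⊤ with hv | hv
      · rw [htop v hv]; exact le_top
      · rw [hfin v hv]
        refine EReal.coe_nonneg.mpr ?_
        have := subdiff_real_ineq hne_bot hsol hv
        simp only [hℓ]
        linarith
    have h_lsc : LowerSemicontinuous h := lsc_add_cont φ hlsc hne_bot ℓ hℓcont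
    have hCmem : ∀ v, φ v ≠ ⊤ → (φ v).toReal + ℓ v ≤ 0 → v ∈ C := by
      intro v hv hle
      refine subdiff_of_real_ineq hne_bot hv (fun z hz => ?_)
      have hz' := subdiff_real_ineq hne_bot hsol hz
      have hexp : g (z - ybar) = g (v - ybar) + g (z - v) := by
        rw [← map_add]; congr 1; abel
      simp only [hℓ] at hle
      linarith
    -- convexity of h
    have hmul_ne_bot : ∀ (b : ℝ), 0 < b → ∀ x : EReal, x ≠ ⊥ → ((b:ℝ) : EReal) * x ≠ ⊥ := by
      intro b hb x hx
      induction x with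
      | bot => exact absurd rfl hx
      | coe r => rw [← EReal.coe_mul]; exact EReal.coe_ne_bot _
      | top => rw [EReal.coe_mul_top_of_pos hb]; simp
    have hconv_h : ∀ u v : Y, ∀ a b : ℝ, 0 ≤ a → 0 ≤ b → a + b = 1 →
        h (a • u + b • v) ≤ (a : EReal) * h u + (b : EReal) * h v := by
      intro u v a b ha hb hab
      rcases eq_or_lt_of_le ha with ha0 | ha0
      · have hb1 : b = 1 := by linarith
        rw [← ha0, hb1]
        norm_num
      rcases eq_or_lt_of_le hb with hb0 | hb0
      · have ha1 : a = 1 := by linarith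
        rw [← hb0, ha1]
        norm_num
      rcases eq_or_ne (φ u) ⊤ with hu | hu
      · have h1 : h u = ⊤ := htop u hu
        rw [h1, EReal.coe_mul_top_of_pos ha0,
          EReal.top_add_of_ne_bot (hmul_ne_bot b hb0 _ (h_ne_bot v))]
        exact le_top
      rcases eq_or_ne (φ v) ⊤ with hv | hv
      · have h1 : h v = ⊤ := htop v hv
        rw [h1, EReal.coe_mul_top_of_pos hb0,
          EReal.add_top_of_ne_bot (hmul_ne_bot a ha0 _ (h_ne_bot u))]
        exact le_top
      -- both finite
      have hcombo := hconv u v a b ha hb hab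
      have hcombo_ne_top : φ (a • u + b • v) ≠ ⊤ := by
        intro hctop
        rw [hctop, ← EReal.coe_toReal hu (hne_bot u), ← EReal.coe_toReal hv (hne_bot v),
          ← EReal.coe_mul, ← EReal.coe_mul, ← EReal.coe_add] at hcombo
        exact absurd (top_le_iff.mp hcombo) (EReal.coe_ne_top _)
      have hcombo_real : (φ (a • u + b • v)).toReal ≤ a * (φ u).toReal + b * (φ v).toReal := by
        have := EReal.toReal_le_toReal hcombo (hne_bot _) (by
          rw [← EReal.coe_toReal hu (hne_bot u), ← EReal.coe_toReal hv (hne_bot v),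
            ← EReal.coe_mul, ← EReal.coe_mul, ← EReal.coe_add]
          exact EReal.coe_ne_top _)
        rwa [← EReal.coe_toReal hu (hne_bot u), ← EReal.coe_toReal hv (hne_bot v),
          ← EReal.coe_mul, ← EReal.coe_mul, ← EReal.coe_add, EReal.toReal_coe] at this
      have hsplit : (a • u + b • v) - ybar = a • (u - ybar) + b • (v - ybar) := by
        have h5 : (a + b) • ybar = ybar := by rw [hab, one_smul]
        rw [smul_sub, smul_sub]
        rw [show a • u - a • ybar + (b • v - b • ybar)
            = a • u + b • v - (a + b) • ybar by rw [add_smul]; abel, h5]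
      have hℓaff : ℓ (a • u + b • v) = a * ℓ u + b * ℓ v := by
        simp only [hℓ]
        rw [hsplit, map_add, map_smul, map_smul, smul_eq_mul, smul_eq_mul]
        linear_combination tyb * hab
      rw [hfin _ hcombo_ne_top, hfin _ hu, hfin _ hv, ← EReal.coe_mul, ← EReal.coe_mul,
        ← EReal.coe_add, EReal.coe_le_coe_iff, hℓaff]
      nlinarith [hcombo_real]
    -- choose neighborhood and constant
    obtain ⟨r1, hr1, hr1sub⟩ := Metric.nhds_basis_ball.mem_iff.mp hV
    set ρ : ℝ := r1 / 2 with hρ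
    have hρpos : 0 < ρ := by rw [hρ]; exact half_pos hr1
    set κ' : ℝ := κ * M with hκ'
    have hκ'pos : 0 < κ' := mul_pos hκ hM
    set c : ℝ := min (1 / (4 * κ')) (r0' / (2 * ρ)) with hc
    have hcpos : 0 < c := lt_min (div_pos one_pos (by linarith)) (div_pos hr0'pos (by linarith))
    refine ⟨ball ybar ρ, ball_mem_nhds _ hρpos, c, hcpos, fun y hy => ?_⟩
    set d : ℝ := infDist y C with hd
    rcases eq_or_ne (φ y) ⊤ with hyt | hyt
    · rw [hyt]; exact le_top
    -- reduce to real inequality c * d^2 ≤ (h y).toReal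
    have hkey : c * d ^ 2 ≤ (h y).toReal := by
      have hr_pos : (0:ℝ) ≤ (h y).toReal := by
        rw [h_toReal y hyt]
        have := subdiff_real_ineq hne_bot hsol hyt
        simp only [hℓ]
        linarith
      rcases eq_or_lt_of_le (hd_nonneg y) with hd0 | hdpos
      · have hd0' : d = 0 := by rw [hd, ← hd0]
        rw [hd0']
        simpa using hr_pos
      by_contra hcon
      push_neg at hcon
      set hy' : ℝ := (h y).toReal with hhy'
      have hy'0 : 0 < hy' := by
        rcases eq_or_lt_of_le hr_pos with he | hlt
        · exfalso
          have hz0 : (φ y).toReal + ℓ y = 0 := by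
            rw [← h_toReal y hyt, ← hhy', ← he]
          have hyC : y ∈ C := hCmem y hyt (le_of_eq hz0)
          have hle0 : infDist y C ≤ 0 := by
            simpa using infDist_le_dist_of_mem (x := y) hyC
          have hdd0 : d ≤ 0 := by rw [hd]; exact hle0
          linarith
        · exact hlt
      have hdpos' : 0 < d := by rw [hd]; exact hdpos
      set ε : ℝ := 2 * hy' / d with hε
      have hεpos : 0 < ε := by rw [hε]; exact div_pos (by linarith) hdpos'
      obtain ⟨z, hz1, hz2, hz3⟩ := my_ekeland_ereal h h_lsc h0 y (h_ne_top y hyt) ε hεpos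
      clear_value d hy' ε
      have hzy : dist z y ≤ d / 2 := by
        have h6 : ε * dist z y ≤ hy' := by rw [hhy']; exact hz2
        rw [hε, div_mul_eq_mul_div, div_le_iff₀ hdpos'] at h6
        by_contra hq
        push_neg at hq
        have h7 := mul_lt_mul_of_pos_left (show d < 2 * dist z y by linarith only [hq]) hy'0
        linarith only [h6, h7]
      have hdyb : dist y ybar < ρ := by rwa [mem_ball] at hy
      have hdd : d ≤ dist y ybar := by rw [hd]; exact hd_le y
      have hzV : z ∈ V := by
        apply hr1sub
        rw [mem_ball]
        calc dist z ybar ≤ dist z y + dist y ybar := dist_triangle _ _ _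
          _ ≤ d / 2 + dist y ybar := by linarith only [hzy]
          _ < ρ / 2 + ρ := by
              have := hdd.trans_lt hdyb
              linarith only [this, hdyb]
          _ < r1 := by rw [hρ]; linarith only [hr1]
      have hz_ne_top : h z ≠ ⊤ := ne_top_of_le_ne_top (h_ne_top y hyt) hz1
      have hφz_ne_top : φ z ≠ ⊤ := by
        intro hzt
        exact hz_ne_top (htop z hzt)
      obtain ⟨w₁, hw₁norm, hw₁⟩ := exists_small_subgradient h h_ne_bot hconv_h z hz_ne_top ε
        hεpos (fun z' => by rw [← dist_eq_norm]; exact hz3 z')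
      -- translate to subgradient of φ
      have hwsub : w₁ + g ∈ subdiff φ z := by
        refine subdiff_of_real_ineq hne_bot hφz_ne_top (fun z' hz' => ?_)
        have := subdiff_real_ineq h_ne_bot hw₁ (h_ne_top z' hz')
        rw [h_toReal z hφz_ne_top, h_toReal z' hz'] at this
        have hexp : g (z' - ybar) = g (z - ybar) + g (z' - z) := by
          rw [← map_add]; congr 1; abel
        simp only [hℓ] at this
        simp only [ContinuousLinearMap.add_apply]
        linarith only [this, hexp]
      have hwg : ‖(w₁ + g) - g‖ ≤ ε := by
        rw [add_sub_cancel_right]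
        exact hw₁norm
      have hεr0' : ε ≤ r0' := by
        have h1 : ε < 2 * c * d := by
          rw [hε, div_lt_iff₀ hdpos']
          linarith only [hcon]
        have h2 : d < ρ := lt_of_le_of_lt hdd hdyb
        have h3 : c ≤ r0' / (2 * ρ) := min_le_right _ _
        have h5 : 2 * c * d ≤ 2 * (r0' / (2 * ρ)) * ρ := by
          apply mul_le_mul
          · exact mul_le_mul_of_nonneg_left h3 (by norm_num)
          · exact h2.le
          · exact hdpos'.le
          · have h6 : 0 < r0' / (2 * ρ) := div_pos hr0'pos (by linarith only [hρpos])
            linarith only [h6]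
        have h4 : 2 * (r0' / (2 * ρ)) * ρ = r0' := by
          field_simp
        linarith only [h1, h5, h4]
      have hSRz := hSR z hzV (w₁ + g) hwsub (hwg.trans hεr0')
      have hlow : d / 2 ≤ infDist z C := by
        have := infDist_le_infDist_add_dist (x := y) (y := z) (s := C)
        rw [dist_comm] at hzy
        rw [← hd] at this
        linarith only [this, hzy]
      have : d / 2 ≤ κ' * ε := by
        calc d / 2 ≤ infDist z C := hlow
          _ ≤ κ' * ‖(w₁ + g) - g‖ := hSRz
          _ ≤ κ' * ε := mul_le_mul_of_nonneg_left hwg hκ'pos.le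
      have hc4 : c ≤ 1 / (4 * κ') := min_le_left _ _
      rw [hε] at this
      have h7 := mul_le_mul_of_nonneg_right this hdpos'.le
      have h8 : κ' * (2 * hy' / d) * d = 2 * κ' * hy' := by
        field_simp
      have h9 : d ^ 2 ≤ 4 * κ' * hy' := by linarith only [h7, h8]
      have h10 := mul_le_mul_of_nonneg_left h9
        (le_of_lt (show (0:ℝ) < 1/(4*κ') from div_pos one_pos (by linarith)))
      have h11 : 1/(4*κ') * (4*κ'*hy') = hy' := by field_simp
      have h12 := mul_le_mul_of_nonneg_right hc4 (sq_nonneg d)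
      linarith only [h10, h11, h12, hcon]
    -- assemble the growth inequality
    rw [← EReal.coe_toReal hybt (hne_bot ybar), ← EReal.coe_add,
      ← EReal.coe_toReal hyt (hne_bot y), EReal.coe_le_coe_iff]
    rw [h_toReal y hyt] at hkey
    simp only [hℓ] at hkey
    rw [← htyb]
    linarith only [hkey]
  · -- quadratic growth ⇒ calmness
    rintro ⟨U', hU', c, hcpos, hgrow⟩
    obtain ⟨t, ht_nhds, L, hL⟩ := hlip
    have hxbar_t : xbar ∈ t := mem_of_mem_nhds ht_nhds
    refine ⟨((L:ℝ) + 1) / c, div_pos (by positivity) hcpos, t, ht_nhds, U', hU',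
      fun x hx y hy hyV => ?_⟩
    set d : ℝ := infDist y C with hd
    have hyt : φ y ≠ ⊤ := hy.1
    have hLip : ‖f x - f xbar‖ ≤ (L:ℝ) * ‖x - xbar‖ := by
      have := hL.dist_le_mul x hx xbar hxbar_t
      rwa [dist_eq_norm, dist_eq_norm] at this
    have hclaim : c * d ^ 2 ≤ (L:ℝ) * ‖x - xbar‖ * d := by
      have hstep : ∀ ε' > (0:ℝ), c * d ^ 2 ≤ (L:ℝ) * ‖x - xbar‖ * (d + ε') := by
        intro ε' hε'
        obtain ⟨yh, hyhC, hyhd⟩ := (infDist_lt_iff hCne).mp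
          (show infDist y C < d + ε' by rw [← hd]; linarith)
        have hyht : φ yh ≠ ⊤ := hyhC.1
        -- three subgradient inequalities
        have hi1 := subdiff_real_ineq hne_bot hy hyht
        have hi2 := subdiff_real_ineq hne_bot hyhC hybt
        have hi3 : (φ ybar).toReal + (g (y - ybar) + c * d ^ 2) ≤ (φ y).toReal := by
          have := hgrow y hyV
          rw [← hd] at this
          rw [← EReal.coe_toReal hybt (hne_bot ybar), ← EReal.coe_add,
            ← EReal.coe_toReal hyt (hne_bot y), EReal.coe_le_coe_iff] at this
          exact this
        -- bound the pairing
        have hpair : ((f xbar) - (f x)) (y - yh) ≤ ‖f x - f xbar‖ * ‖y - yh‖ := by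
          calc ((f xbar) - (f x)) (y - yh) ≤ |((f xbar) - (f x)) (y - yh)| := le_abs_self _
            _ ≤ ‖(f xbar) - (f x)‖ * ‖y - yh‖ := by
                rw [← Real.norm_eq_abs]
                exact ((f xbar) - (f x)).le_opNorm _
            _ = ‖f x - f xbar‖ * ‖y - yh‖ := by rw [norm_sub_rev]
        have hyhnorm : ‖y - yh‖ < d + ε' := by rwa [← dist_eq_norm]
        -- expand the functionals
        have he1 : (-(f x)) (yh - y) = -((f x) yh) + (f x) y := by
          simp [map_sub]
        have he2 : g (ybar - yh) = g ybar - g yh := by rw [map_sub]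
        have he3 : g (y - ybar) = g y - g ybar := by rw [map_sub]
        have he4 : ((f xbar) - (f x)) (y - yh) = -(g y) + g yh - (f x) y + (f x) yh := by
          simp only [ContinuousLinearMap.sub_apply, map_sub, hg,
            ContinuousLinearMap.neg_apply]
          ring
        have hfinal : c * d ^ 2 ≤ ((f xbar) - (f x)) (y - yh) := by
          rw [he4]
          rw [he1] at hi1
          rw [he2] at hi2
          rw [he3] at hi3
          linarith only [hi1, hi2, hi3]
        calc c * d ^ 2 ≤ ((f xbar) - (f x)) (y - yh) := hfinal
          _ ≤ ‖f x - f xbar‖ * ‖y - yh‖ := hpair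
          _ ≤ ((L:ℝ) * ‖x - xbar‖) * (d + ε') := by
              apply mul_le_mul hLip hyhnorm.le (norm_nonneg _)
              positivity
          _ = (L:ℝ) * ‖x - xbar‖ * (d + ε') := by ring
      by_contra hcon
      push_neg at hcon
      set B : ℝ := (L:ℝ) * ‖x - xbar‖ with hB
      have hBnn : 0 ≤ B := mul_nonneg (NNReal.coe_nonneg L) (norm_nonneg _)
      set ε' : ℝ := (c * d ^ 2 - B * d) / (2 * (B + 1)) with hε'
      have hε'pos : 0 < ε' := by
        rw [hε']
        exact div_pos (by linarith) (by linarith)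
      have := hstep ε' hε'pos
      have hBe : B * ε' ≤ (B + 1) * ε' := by nlinarith
      have h2 : (B + 1) * ε' = (c * d ^ 2 - B * d) / 2 := by
        rw [hε']; field_simp
      nlinarith [this]
    -- conclude
    rcases eq_or_lt_of_le (hd_nonneg y) with hd0 | hdpos
    · rw [hd, ← hd0]
      exact mul_nonneg (div_nonneg (by positivity) hcpos.le) (norm_nonneg _)
    · rw [div_mul_eq_mul_div, le_div_iff₀ hcpos]
      nlinarith [hclaim, hLip, norm_nonneg (x - xbar), hdpos]
end

section
/- Let X be a real Banach space, let Y be a reflexive real Banach space with dual Y*, let φ ∈ Γ(Y), and let f : X × Y → Y* be Lipschitz continuous around a point (x̄, ȳ) satisfying 0 ∈ f(x̄, ȳ) + ∂φ(ȳ). Assume f is partially strictly differentiable at (x̄, ȳ) with respect to x uniformly in y, with partial derivative A = ∇ₓf(x̄, ȳ) : X → Y* surjective. Assume in addition that there exist constants c > 0, ℓ ≥ 0 with ℓ < c and a neighborhood W of ȳ such that (a) φ(y) ≥ φ(ȳ) + ⟨−f(x̄, ȳ), y − ȳ⟩ + c·‖y − ȳ‖² for all y ∈ W, and (b) ‖f(x,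 y) − f(x, y')‖ ≤ ℓ·‖y − y'‖ for all x near x̄ and y, y' near ȳ. Then the solution map S : X ⇉ Y defined by S(x) = {y ∈ Y : 0 ∈ f(x, y) + ∂φ(y)} has the isolated calmness property at x̄ for ȳ. -/
open Topology Filter Metric Set

/-- Let `X` be a Banach space, `Y` a reflexive Banach space, `φ ∈ Γ(Y)`, and
`f : X × Y → Y*` Lipschitz around `(x̄, ȳ)` with `0 ∈ f(x̄, ȳ) + ∂φ(ȳ)`. Assume `f` is
partially strictly differentiable at `(x̄, ȳ)` with respect to `x` uniformly in `y`, with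
surjective partial derivative `A = ∇ₓf(x̄, ȳ)`. Assume moreover that there are `c > 0`,
`0 ≤ ℓ < c` and a neighborhood `W` of `ȳ` such that (a) the quadratic growth condition
`φ(y) ≥ φ(ȳ) + ⟨-f(x̄, ȳ), y - ȳ⟩ + c·‖y - ȳ‖²` holds on `W`, and (b)
`‖f(x, y) - f(x, y')‖ ≤ ℓ·‖y - y'‖` for `x` near `x̄` and `y, y'` near `ȳ`. Then the
solution map `S(x) = {y : 0 ∈ f(x, y) + ∂φ(y)}` has the isolated calmness property at `x̄`
for `ȳ`: for some `κ > 0` and neighborhoods `U` of `x̄`, `V` of `ȳ`,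
`‖y - ȳ‖ ≤ κ·‖x - x̄‖` for all `x ∈ U`, `y ∈ S(x) ∩ V`. -/
theorem stmt_15 {X Y : Type*}
    [NormedAddCommGroup X] [NormedSpace ℝ X] [CompleteSpace X]
    [NormedAddCommGroup Y] [NormedSpace ℝ Y] [CompleteSpace Y]
    (hrefl : Function.Surjective ⇑(NormedSpace.inclusionInDoubleDual ℝ Y))
    (φ : Y → EReal)
    (hproper : ∃ y, φ y ≠ ⊤) (hne_bot : ∀ y, φ y ≠ ⊥)
    (hlsc : LowerSemicontinuous φ)
    (hconv : ∀ y z : Y, ∀ a b : ℝ, 0 ≤ a → 0 ≤ b → a + b = 1 →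
      φ (a • y + b • z) ≤ (a : EReal) * φ y + (b : EReal) * φ z)
    (f : X × Y → (Y →L[ℝ] ℝ)) (xbar : X) (ybar : Y)
    (hsol : -(f (xbar, ybar)) ∈ subdiff φ ybar)
    (hlip : ∃ t ∈ 𝓝 (xbar, ybar), ∃ L : NNReal, LipschitzOnWith L f t)
    (A : X →L[ℝ] (Y →L[ℝ] ℝ))
    (hpartial : ∀ ε > (0 : ℝ), ∃ δ > (0 : ℝ), ∀ x x' : X, ∀ y : Y,
      ‖x - xbar‖ ≤ δ → ‖x' - xbar‖ ≤ δ → ‖y - ybar‖ ≤ δ →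
      ‖f (x, y) - f (x', y) - A (x - x')‖ ≤ ε * ‖x - x'‖)
    (hAsurj : Function.Surjective ⇑A)
    (c ℓ : ℝ) (hc : 0 < c) (hℓ : 0 ≤ ℓ) (hℓc : ℓ < c)
    (W : Set Y) (hW : W ∈ 𝓝 ybar)
    (hgrowth : ∀ y ∈ W,
      φ ybar + (((-(f (xbar, ybar))) (y - ybar) + c * ‖y - ybar‖ ^ 2 : ℝ) : EReal) ≤ φ y)
    (hliny : ∃ U0 ∈ 𝓝 xbar, ∃ W0 ∈ 𝓝 ybar, ∀ x ∈ U0, ∀ y ∈ W0, ∀ y' ∈ W0,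
      ‖f (x, y) - f (x, y')‖ ≤ ℓ * ‖y - y'‖) :
    ∃ κ > (0 : ℝ), ∃ U ∈ 𝓝 xbar, ∃ V ∈ 𝓝 ybar, ∀ x ∈ U, ∀ y : Y,
      -(f (x, y)) ∈ subdiff φ y → y ∈ V → ‖y - ybar‖ ≤ κ * ‖x - xbar‖ := by
  obtain ⟨δ₁, hδ₁, hpart⟩ := hpartial 1 one_pos
  obtain ⟨U0, hU0, W0, hW0, hlin⟩ := hliny
  obtain ⟨δ₂, hδ₂, hballW⟩ := Metric.mem_nhds_iff.mp (Filter.inter_mem hW hW0)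
  obtain ⟨δ₃, hδ₃, hballU⟩ := Metric.mem_nhds_iff.mp hU0
  have hcℓ : (0 : ℝ) < c - ℓ := sub_pos.mpr hℓc
  set δ := min (min δ₂ δ₃) δ₁ with hδdef
  have hδpos : 0 < δ := lt_min (lt_min hδ₂ hδ₃) hδ₁
  refine ⟨(1 + ‖A‖) / (c - ℓ), by positivity, ball xbar δ, ball_mem_nhds _ hδpos,
    ball ybar δ, ball_mem_nhds _ hδpos, ?_⟩
  intro x hx y hy hyV
  have hxd : ‖x - xbar‖ < δ := by rwa [← dist_eq_norm, ← mem_ball]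
  have hyd : ‖y - ybar‖ < δ := by rwa [← dist_eq_norm, ← mem_ball]
  have hyWW : y ∈ W ∩ W0 := hballW (by
    simp only [mem_ball, dist_eq_norm]
    exact lt_of_lt_of_le hyd (le_trans (min_le_left _ _) (min_le_left _ _)))
  have hxU0 : x ∈ U0 := hballU (by
    simp only [mem_ball, dist_eq_norm]
    exact lt_of_lt_of_le hxd (le_trans (min_le_left _ _) (min_le_right _ _)))
  have hyW0bar : ybar ∈ W0 := mem_of_mem_nhds hW0
  -- extract real values of φ
  obtain ⟨a, ha⟩ : ∃ a : ℝ, φ y = (a : EReal) :=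
    ⟨(φ y).toReal, (EReal.coe_toReal hy.1 (hne_bot y)).symm⟩
  obtain ⟨b, hb⟩ : ∃ b : ℝ, φ ybar = (b : EReal) :=
    ⟨(φ ybar).toReal, (EReal.coe_toReal hsol.1 (hne_bot ybar)).symm⟩
  have h1 : (a : EReal) + (((-(f (x, y))) (ybar - y) : ℝ) : EReal) ≤ (b : EReal) := by
    have := hy.2 ybar; rwa [ha, hb] at this
  have h2 : (b : EReal) +
      (((-(f (xbar, ybar))) (y - ybar) + c * ‖y - ybar‖ ^ 2 : ℝ) : EReal) ≤ (a : EReal) := by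
    have := hgrowth y hyWW.1; rwa [ha, hb] at this
  rw [← EReal.coe_add, EReal.coe_le_coe_iff] at h1 h2
  have key : f (x, y) (y - ybar) - f (xbar, ybar) (y - ybar) + c * ‖y - ybar‖ ^ 2 ≤ 0 := by
    simp only [ContinuousLinearMap.neg_apply, map_sub] at h1 h2 ⊢
    linarith
  -- bound ‖f(x,y) - f(xbar,ybar)‖
  have hx1 : ‖x - xbar‖ ≤ δ₁ := le_of_lt (lt_of_lt_of_le hxd (min_le_right _ _))
  have hy1 : ‖y - ybar‖ ≤ δ₁ := le_of_lt (lt_of_lt_of_le hyd (min_le_right _ _))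
  have hp := hpart x xbar y hx1 (by simpa using hδ₁.le) hy1
  have bound1 : ‖f (x, y) - f (xbar, y)‖ ≤ (1 + ‖A‖) * ‖x - xbar‖ := by
    calc ‖f (x, y) - f (xbar, y)‖
        = ‖(f (x, y) - f (xbar, y) - A (x - xbar)) + A (x - xbar)‖ := by
          congr 1; abel
      _ ≤ ‖f (x, y) - f (xbar, y) - A (x - xbar)‖ + ‖A (x - xbar)‖ := norm_add_le _ _
      _ ≤ 1 * ‖x - xbar‖ + ‖A‖ * ‖x - xbar‖ := add_le_add hp (A.le_opNorm _)
      _ = (1 + ‖A‖) * ‖x - xbar‖ := by ring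
  have bound2 : ‖f (xbar, y) - f (xbar, ybar)‖ ≤ ℓ * ‖y - ybar‖ :=
    hlin xbar (mem_of_mem_nhds hU0) y hyWW.2 ybar hyW0bar
  have bound3 : ‖f (xbar, ybar) - f (x, y)‖ ≤ (1 + ‖A‖) * ‖x - xbar‖ + ℓ * ‖y - ybar‖ := by
    calc ‖f (xbar, ybar) - f (x, y)‖
        ≤ ‖f (xbar, ybar) - f (xbar, y)‖ + ‖f (xbar, y) - f (x, y)‖ :=
          norm_sub_le_norm_sub_add_norm_sub _ _ _
      _ ≤ (1 + ‖A‖) * ‖x - xbar‖ + ℓ * ‖y - ybar‖ := by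
          rw [norm_sub_rev (f (xbar, ybar)) (f (xbar, y)),
            norm_sub_rev (f (xbar, y)) (f (x, y))]
          linarith
  have pair : (f (xbar, ybar) - f (x, y)) (y - ybar) ≤
      ((1 + ‖A‖) * ‖x - xbar‖ + ℓ * ‖y - ybar‖) * ‖y - ybar‖ := by
    calc (f (xbar, ybar) - f (x, y)) (y - ybar)
        ≤ ‖(f (xbar, ybar) - f (x, y)) (y - ybar)‖ := le_abs_self _
      _ ≤ ‖f (xbar, ybar) - f (x, y)‖ * ‖y - ybar‖ :=
          (f (xbar, ybar) - f (x, y)).le_opNorm _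
      _ ≤ ((1 + ‖A‖) * ‖x - xbar‖ + ℓ * ‖y - ybar‖) * ‖y - ybar‖ :=
          mul_le_mul_of_nonneg_right bound3 (norm_nonneg _)
  simp only [ContinuousLinearMap.sub_apply] at pair
  -- combine
  rw [div_mul_eq_mul_div, le_div_iff₀ hcℓ]
  rcases eq_or_lt_of_le (norm_nonneg (y - ybar)) with h0 | h0
  · rw [← h0, zero_mul]
    positivity
  · nlinarith [norm_nonneg (x - xbar), norm_nonneg (y - ybar)]
end
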